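/- (Gateaux derivative of the pinball risk) Let τ ∈ (0,1), and let W and H be real-valued random variables on a probability space with E[|H|] < ∞ and P(W = 0) = 0. Then the function φ(t) := E[ρ_τ(W − tH) − ρ_τ(W)] is well-defined and finite for all t ∈ ℝ, and φ is differentiable at t = 0 with φ'(0) = −E[ψ_τ(W)·H]. -/

import Mathlib

open MeasureTheory

/-- The pinball (check) loss `ρ_τ(u) = u (τ - 1{u < 0})`. -/
noncomputable def pinball (τ u : ℝ) : ℝ := u * (τ - if u < 0 then 1 else 0)

/-- The score function `ψ_τ(u) = τ - 1{u ≤ 0}`. -/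
noncomputable def score (τ u : ℝ) : ℝ := τ - if u ≤ 0 then 1 else 0


lemma pinball_eq (τ u : ℝ) : pinball τ u = τ * u - min u 0 := by
  unfold pinball
  rcases lt_or_ge u 0 with h | h
  · simp [h, min_eq_left h.le]; ring
  · simp [not_lt.2 h, min_eq_right h]; ring

lemma pinball_lip {τ : ℝ} (hτ0 : 0 < τ) (hτ1 : τ < 1) (a b : ℝ) :
    |pinball τ a - pinball τ b| ≤ |a - b| := by
  rw [pinball_eq, pinball_eq, abs_le]
  rcases le_total a 0 with h1 | h1 <;> rcases le_total b 0 with h2 | h2 <;>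
    simp [min_eq_left, min_eq_right, h1, h2] <;>
    constructor <;>
    nlinarith [le_abs_self (a - b), neg_abs_le (a - b),
      mul_nonneg hτ0.le (sub_nonneg.2 (le_abs_self (a - b))),
      mul_nonneg hτ0.le (by linarith [neg_abs_le (a - b)] : (0:ℝ) ≤ |a - b| + (a - b)),
      mul_nonneg (by linarith : (0:ℝ) ≤ 1 - τ) (sub_nonneg.2 (le_abs_self (a - b))),
      mul_nonneg (by linarith : (0:ℝ) ≤ 1 - τ) (by linarith [neg_abs_le (a - b)] : (0:ℝ) ≤ |a - b| + (a - b))]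

lemma continuous_pinball (τ : ℝ) : Continuous (pinball τ) := by
  have : pinball τ = fun u => τ * u - min u 0 := funext (pinball_eq τ)
  rw [this]; continuity

lemma measurable_score (τ : ℝ) : Measurable (score τ) := by
  unfold score
  exact measurable_const.sub (Measurable.ite measurableSet_Iic measurable_const measurable_const)

lemma hasDerivAt_pinball_line {τ w h : ℝ} (hw : w ≠ 0) :
    HasDerivAt (fun t : ℝ => pinball τ (w - t * h)) (-(score τ w * h)) 0 := by
  set c := score τ w with hc
  have hlin : HasDerivAt (fun t : ℝ => (w - t * h) * c) (-(c * h)) 0 := by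
    have : HasDerivAt (fun t : ℝ => w - t * h) (-h) 0 := by
      simpa using ((hasDerivAt_id (0:ℝ)).mul_const h).const_sub w
    simpa [mul_comm] using this.mul_const c
  refine hlin.congr_of_eventuallyEq ?_
  have hε : (0:ℝ) < |w| / (|h| + 1) := by positivity
  filter_upwards [Metric.ball_mem_nhds (0:ℝ) hε] with t ht
  have ht' : |t| < |w| / (|h| + 1) := by simpa [Real.dist_eq] using ht
  have hth : |t * h| < |w| := by
    calc |t * h| = |t| * |h| := abs_mul t h
    _ ≤ |t| * (|h| + 1) := by nlinarith [abs_nonneg t]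
    _ < |w| / (|h| + 1) * (|h| + 1) := by nlinarith [abs_nonneg h]
    _ = |w| := by field_simp
  rcases hw.lt_or_gt with hwneg | hwpos
  · have h1 : w - t * h < 0 := by
      have := le_abs_self (-(t*h)); rw [abs_neg] at this
      have : -(t*h) ≤ |t*h| := this
      rw [abs_of_neg hwneg] at hth; linarith
    simp [pinball, score, hc, h1, hwneg.le, if_pos]
  · have h1 : ¬ (w - t * h < 0) := by
      have := le_abs_self (t*h)
      rw [abs_of_pos hwpos] at hth; push_neg; linarith
    simp [pinball, score, hc, h1, not_le.2 hwpos]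

/-- Gateaux derivative of the pinball risk: for integrable `H` and `P(W = 0) = 0`,
`φ(t) = E[ρ_τ(W − tH) − ρ_τ(W)]` is finite for all `t` and differentiable at `0`
with `φ'(0) = −E[ψ_τ(W) H]`. -/
theorem pinball_risk_gateaux_deriv
    {Ω : Type*} [MeasurableSpace Ω] (μ : Measure Ω) [IsProbabilityMeasure μ]
    (τ : ℝ) (hτ : τ ∈ Set.Ioo (0:ℝ) 1)
    (W H : Ω → ℝ) (hW : Measurable W) (hH : Measurable H)
    (hHint : Integrable H μ) (hW0 : μ {ω | W ω = 0} = 0) :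
    (∀ t : ℝ, Integrable (fun ω => pinball τ (W ω - t * H ω) - pinball τ (W ω)) μ) ∧
    HasDerivAt (fun t : ℝ => ∫ ω, (pinball τ (W ω - t * H ω) - pinball τ (W ω)) ∂μ)
      (-∫ ω, score τ (W ω) * H ω ∂μ) 0 := by
  obtain ⟨hτ0, hτ1⟩ := hτ
  have hmeas : ∀ t : ℝ, Measurable (fun ω => pinball τ (W ω - t * H ω) - pinball τ (W ω)) := by
    intro t
    exact ((continuous_pinball τ).measurable.comp (hW.sub (hH.const_mul t))).sub
      ((continuous_pinball τ).measurable.comp hW)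
  have hbound : ∀ t : ℝ, ∀ ω, ‖pinball τ (W ω - t * H ω) - pinball τ (W ω)‖ ≤ |t| * |H ω| := by
    intro t ω
    calc ‖pinball τ (W ω - t * H ω) - pinball τ (W ω)‖
        ≤ |(W ω - t * H ω) - W ω| := pinball_lip hτ0 hτ1 _ _
      _ = |t| * |H ω| := by rw [show (W ω - t * H ω) - W ω = -(t * H ω) by ring,
          abs_neg, abs_mul]
  have hint : ∀ t : ℝ, Integrable (fun ω => pinball τ (W ω - t * H ω) - pinball τ (W ω)) μ := by
    intro t
    exact (Integrable.const_mul hHint.abs |t|).mono' (hmeas t).aestronglyMeasurable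
      (Filter.Eventually.of_forall (hbound t))
  refine ⟨hint, ?_⟩
  have hae : ∀ᵐ ω ∂μ, W ω ≠ 0 := by
    rw [ae_iff]; simpa using hW0
  have key := hasDerivAt_integral_of_dominated_loc_of_lip
    (F := fun t ω => pinball τ (W ω - t * H ω) - pinball τ (W ω))
    (F' := fun ω => -(score τ (W ω) * H ω)) (x₀ := (0:ℝ)) (bound := fun ω => |H ω|)
    (μ := μ) Filter.univ_mem
    (Filter.Eventually.of_forall fun t => (hmeas t).aestronglyMeasurable)
    (hint 0)
    ((((measurable_score τ).comp hW).mul hH).neg.aestronglyMeasurable)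
    (Filter.Eventually.of_forall fun ω => ?_)
    hHint.abs
    (hae.mono fun ω hω => ?_)
  · rcases key with ⟨-, hd⟩
    have : (∫ ω, -(score τ (W ω) * H ω) ∂μ) = -∫ ω, score τ (W ω) * H ω ∂μ :=
      integral_neg _
    rwa [this] at hd
  · apply LipschitzWith.lipschitzOnWith
    apply LipschitzWith.of_dist_le_mul
    intro s t
    have : dist (pinball τ (W ω - s * H ω) - pinball τ (W ω))
        (pinball τ (W ω - t * H ω) - pinball τ (W ω))
        = |pinball τ (W ω - s * H ω) - pinball τ (W ω - t * H ω)| := by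
      rw [Real.dist_eq]; ring_nf
    rw [this]
    calc |pinball τ (W ω - s * H ω) - pinball τ (W ω - t * H ω)|
        ≤ |(W ω - s * H ω) - (W ω - t * H ω)| := pinball_lip hτ0 hτ1 _ _
      _ = |H ω| * dist s t := by
          rw [Real.dist_eq, show (W ω - s * H ω) - (W ω - t * H ω) = H ω * (t - s) by ring,
            abs_mul, abs_sub_comm]
      _ ≤ ↑(Real.nnabs (|H ω|)) * dist s t := by
          rw [Real.coe_nnabs, abs_abs]
  · exact (hasDerivAt_pinball_line hω).sub_const _
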